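/- Suppose α, δ, ζ solve the first-order ODE system α' − iωδ = f₁, α − iω·μ⁻¹·ζ = f₃, −δ' + ζ + iωα = g₁ almost everywhere on (0,L), with boundary conditions α(0) = 0 and iω·δ(L) = −μ̃·α(L). Then α satisfies the weak second-order formulation: for every H¹(0,L) function v with v(0) = 0, ∫₀ᴸ α'·conj(v') dt + (μ − ω²)·∫₀ᴸ α·conj(v) dt + μ̃·α(L)·conj(v(L)) = ∫₀ᴸ f₁·conj(v') dt + iω·∫₀ᴸ g₁·conj(v) dt + μ·∫₀ᴸ f₃·conj(v) dt. -/

import Mathlib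

open MeasureTheory

/-- A function in `H¹(0,L)`: a pair `(toFun, deriv)` where `toFun` is continuous on `[0,L]`,
`deriv` is square-integrable on `(0,L)`, and `toFun x = toFun 0 + ∫₀ˣ deriv` on `[0,L]`. -/
structure H1 (L : ℝ) where
  toFun : ℝ → ℂ
  deriv : ℝ → ℂ
  continuousOn : ContinuousOn toFun (Set.Icc 0 L)
  memLp_deriv : MemLp deriv 2 (volume.restrict (Set.Ioo 0 L))
  eq_intderiv : ∀ x ∈ Set.Icc 0 L, toFun x = toFun 0 + ∫ t in (0:ℝ)..x, deriv t

/-- The sesquilinear form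
`a¹ᴰ_κ(u,v) = ∫₀ᴸ u' conj(v') + κ² ∫₀ᴸ u conj(v) + κ u(L) conj(v(L))`. -/
noncomputable def a1D (L : ℝ) (κ : ℂ) (u v : H1 L) : ℂ :=
  (∫ t in Set.Ioo (0:ℝ) L, u.deriv t * star (v.deriv t)) +
    κ ^ 2 * (∫ t in Set.Ioo (0:ℝ) L, u.toFun t * star (v.toFun t)) +
    κ * u.toFun L * star (v.toFun L)

/-- The weighted `H¹` norm `‖u‖²_{1,s} = ‖u'‖²_{L²(0,L)} + s² ‖u‖²_{L²(0,L)}`. -/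
noncomputable def h1Norm (L : ℝ) (s : ℝ) (u : H1 L) : ℝ :=
  Real.sqrt ((∫ t in Set.Ioo (0:ℝ) L, ‖u.deriv t‖ ^ 2) +
    s ^ 2 * ∫ t in Set.Ioo (0:ℝ) L, ‖u.toFun t‖ ^ 2)

/-- The `L²(0,L)` norm. -/
noncomputable def l2Norm (L : ℝ) (f : ℝ → ℂ) : ℝ :=
  Real.sqrt (∫ t in Set.Ioo (0:ℝ) L, ‖f t‖ ^ 2)

lemma mul2 {m : Measure ℝ} {f g : ℝ → ℂ} (hf : MemLp f 2 m) (hg : MemLp g 2 m) :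
    Integrable (fun t => f t * g t) m := by
  have h := hg.smul (p := 2) (q := 2) (r := 1) hf
  rw [memLp_one_iff_integrable] at h
  exact h

lemma star2 {m : Measure ℝ} {f : ℝ → ℂ} (hf : MemLp f 2 m) :
    MemLp (fun t => star (f t)) 2 m := by
  refine MemLp.of_le hf (Complex.continuous_conj.comp_aestronglyMeasurable hf.1) ?_
  filter_upwards with x
  simp

lemma finmeas (L : ℝ) : IsFiniteMeasure (volume.restrict (Set.Ioo (0:ℝ) L)) := by
  constructor
  rw [Measure.restrict_apply_univ, Real.volume_Ioo]
  exact ENNReal.ofReal_lt_top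

lemma half (L : ℝ) (g h : ℝ → ℂ)
    (hg : Integrable g (volume.restrict (Set.Ioo (0:ℝ) L)))
    (hh : Integrable h (volume.restrict (Set.Ioo (0:ℝ) L))) :
    (∫ p in {p : ℝ × ℝ | p.2 < p.1}, g p.1 * h p.2
        ∂((volume.restrict (Set.Ioo (0:ℝ) L)).prod (volume.restrict (Set.Ioo (0:ℝ) L))))
      = ∫ t in Set.Ioo (0:ℝ) L, g t * ∫ s in Set.Ioo (0:ℝ) t, h s := by
  set m := volume.restrict (Set.Ioo (0:ℝ) L) with hm
  haveI := finmeas L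
  have hA : MeasurableSet {p : ℝ × ℝ | p.2 < p.1} :=
    measurableSet_lt measurable_snd measurable_fst
  have hF : Integrable (fun p : ℝ × ℝ => g p.1 * h p.2) (m.prod m) := hg.mul_prod hh
  rw [← integral_indicator hA, MeasureTheory.integral_prod _ (hF.indicator hA)]
  apply integral_congr_ae
  filter_upwards [ae_restrict_mem measurableSet_Ioo] with t ht
  have h1 : (fun s => Set.indicator {p : ℝ × ℝ | p.2 < p.1}
      (fun p : ℝ × ℝ => g p.1 * h p.2) (t, s))
      = Set.indicator (Set.Iio t) (fun s => g t * h s) := by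
    ext s
    by_cases hs : s < t <;> simp [Set.indicator, hs]
  rw [h1, integral_indicator measurableSet_Iio, hm, Measure.restrict_restrict measurableSet_Iio]
  have h2 : Set.Iio t ∩ Set.Ioo 0 L = Set.Ioo 0 t := by
    ext s
    simp only [Set.mem_inter_iff, Set.mem_Iio, Set.mem_Ioo]
    constructor
    · rintro ⟨h1, h2, h3⟩; exact ⟨h2, h1⟩
    · rintro ⟨h1, h2⟩; exact ⟨h2, h1, h2.trans ht.2⟩
  rw [h2, integral_const_mul]

lemma key (L : ℝ) (g h : ℝ → ℂ)
    (hg : Integrable g (volume.restrict (Set.Ioo (0:ℝ) L)))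
    (hh : Integrable h (volume.restrict (Set.Ioo (0:ℝ) L))) :
    (∫ t in Set.Ioo (0:ℝ) L, g t * ∫ s in Set.Ioo (0:ℝ) t, h s)
      + (∫ t in Set.Ioo (0:ℝ) L, (∫ s in Set.Ioo (0:ℝ) t, g s) * h t)
    = (∫ t in Set.Ioo (0:ℝ) L, g t) * (∫ t in Set.Ioo (0:ℝ) L, h t) := by
  set m := volume.restrict (Set.Ioo (0:ℝ) L) with hm
  haveI := finmeas L
  have hA : MeasurableSet {p : ℝ × ℝ | p.2 < p.1} :=
    measurableSet_lt measurable_snd measurable_fst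
  have hB : MeasurableSet {p : ℝ × ℝ | p.1 < p.2} :=
    measurableSet_lt measurable_fst measurable_snd
  have hF : Integrable (fun p : ℝ × ℝ => g p.1 * h p.2) (m.prod m) := hg.mul_prod hh
  have hterm2 : (∫ t in Set.Ioo (0:ℝ) L, (∫ s in Set.Ioo (0:ℝ) t, g s) * h t)
      = ∫ p in {p : ℝ × ℝ | p.1 < p.2}, g p.1 * h p.2 ∂(m.prod m) := by
    have swp : (∫ p in {p : ℝ × ℝ | p.1 < p.2}, g p.1 * h p.2 ∂(m.prod m))
        = ∫ p in {p : ℝ × ℝ | p.2 < p.1}, h p.1 * g p.2 ∂(m.prod m) := by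
      rw [← integral_indicator hB, ← integral_indicator hA]
      rw [← integral_prod_swap (μ := m) (ν := m)
        (f := Set.indicator {p : ℝ × ℝ | p.1 < p.2} (fun p : ℝ × ℝ => g p.1 * h p.2))]
      apply integral_congr_ae
      filter_upwards with p
      by_cases hp : p.2 < p.1
      · simp [Set.indicator, Prod.swap, hp, mul_comm]
      · simp [Set.indicator, Prod.swap, hp, mul_comm]
    rw [swp, half L h g hh hg]
    apply integral_congr_ae
    filter_upwards with t
    ring
  rw [← half L g h hg hh, hterm2, ← integral_indicator hA, ← integral_indicator hB,
    ← integral_add ((hF.indicator hA)) ((hF.indicator hB))]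
  have hdiag : (m.prod m) {p : ℝ × ℝ | p.1 = p.2} = 0 := by
    have hme : MeasurableSet {p : ℝ × ℝ | p.1 = p.2} :=
      measurableSet_eq_fun measurable_fst measurable_snd
    rw [Measure.prod_apply hme]
    have hz : ∀ x : ℝ, m (Prod.mk x ⁻¹' {p : ℝ × ℝ | p.1 = p.2}) = 0 := by
      intro x
      have hpre : Prod.mk x ⁻¹' {p : ℝ × ℝ | p.1 = p.2} = {x} := by
        ext y; simp [eq_comm]
      rw [hpre, hm, Measure.restrict_apply (measurableSet_singleton x)]
      exact measure_mono_null Set.inter_subset_left Real.volume_singleton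
    simp [hz]
  rw [← integral_prod_mul]
  apply integral_congr_ae
  have hae : ∀ᵐ p ∂(m.prod m), p ∉ {p : ℝ × ℝ | p.1 = p.2} :=
    (measure_eq_zero_iff_ae_notMem (μ := m.prod m)).mp hdiag
  filter_upwards [hae] with p hp
  have hp' : p.1 ≠ p.2 := hp
  rcases lt_or_gt_of_ne hp' with hlt | hgt
  · simp [Set.indicator, hlt, not_lt.mpr hlt.le]
  · simp [Set.indicator, hgt, not_lt.mpr hgt.le]

lemma prim_eq (L : ℝ) (f : ℝ → ℂ) {t : ℝ} (ht0 : 0 ≤ t) (htL : t ≤ L) :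
    (∫ s in Set.Ioo (0:ℝ) t, f s)
      = ∫ s in (0:ℝ)..t, (Set.Ioo (0:ℝ) L).indicator f s := by
  rw [intervalIntegral.integral_of_le ht0, integral_Ioc_eq_integral_Ioo]
  refine setIntegral_congr_fun measurableSet_Ioo fun s hs => ?_
  have hsL : s ∈ Set.Ioo (0:ℝ) L := ⟨hs.1, hs.2.trans_le htL⟩
  exact (Set.indicator_of_mem hsL f).symm

lemma cont_primQ (L : ℝ) (f : ℝ → ℂ)
    (hf : Integrable f (volume.restrict (Set.Ioo (0:ℝ) L))) :
    Continuous (fun t => ∫ s in (0:ℝ)..t, (Set.Ioo (0:ℝ) L).indicator f s) := by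
  have hind : Integrable ((Set.Ioo (0:ℝ) L).indicator f) volume :=
    (integrable_indicator_iff measurableSet_Ioo).2 hf
  exact intervalIntegral.continuous_primitive (fun a b => hind.intervalIntegrable) 0

lemma cont_mem2 (L : ℝ) (f : ℝ → ℂ) (hf : ContinuousOn f (Set.Icc 0 L)) :
    MemLp f 2 (volume.restrict (Set.Ioo (0:ℝ) L)) := by
  haveI := finmeas L
  have hmeas : AEStronglyMeasurable f (volume.restrict (Set.Ioo (0:ℝ) L)) :=
    (hf.mono Set.Ioo_subset_Icc_self).aestronglyMeasurable measurableSet_Ioo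
  obtain ⟨C, hC⟩ := isCompact_Icc.exists_bound_of_continuousOn hf
  refine (memLp_top_of_bound hmeas C ?_).mono_exponent le_top
  filter_upwards [ae_restrict_mem measurableSet_Ioo] with x hx
  exact hC x (Set.Ioo_subset_Icc_self hx)

lemma ibp (L : ℝ) (hL : 0 < L) (u v : H1 L) :
    (∫ t in Set.Ioo (0:ℝ) L, u.deriv t * star (v.toFun t))
      + (∫ t in Set.Ioo (0:ℝ) L, u.toFun t * star (v.deriv t))
    = u.toFun L * star (v.toFun L) - u.toFun 0 * star (v.toFun 0) := by
  haveI := finmeas L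
  set g : ℝ → ℂ := u.deriv with hgdef
  set h : ℝ → ℂ := fun t => star (v.deriv t) with hhdef
  have hg2 : MemLp g 2 (volume.restrict (Set.Ioo (0:ℝ) L)) := u.memLp_deriv
  have hh2 : MemLp h 2 (volume.restrict (Set.Ioo (0:ℝ) L)) := star2 v.memLp_deriv
  have hg : Integrable g (volume.restrict (Set.Ioo (0:ℝ) L)) := hg2.integrable one_le_two
  have hh : Integrable h (volume.restrict (Set.Ioo (0:ℝ) L)) := hh2.integrable one_le_two
  set Qg : ℝ → ℂ := fun t => ∫ s in (0:ℝ)..t, (Set.Ioo (0:ℝ) L).indicator g s with hQgdef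
  set Qh : ℝ → ℂ := fun t => ∫ s in (0:ℝ)..t, (Set.Ioo (0:ℝ) L).indicator h s with hQhdef
  have hQgc : Continuous Qg := cont_primQ L g hg
  have hQhc : Continuous Qh := cont_primQ L h hh
  have hQg2 : MemLp Qg 2 (volume.restrict (Set.Ioo (0:ℝ) L)) :=
    cont_mem2 L Qg hQgc.continuousOn
  have hQh2 : MemLp Qh 2 (volume.restrict (Set.Ioo (0:ℝ) L)) :=
    cont_mem2 L Qh hQhc.continuousOn
  have hQgval : ∀ {x : ℝ}, 0 ≤ x → x ≤ L → Qg x = ∫ s in Set.Ioo (0:ℝ) x, g s := by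
    intro x hx0 hxL
    simp only [hQgdef]
    exact (prim_eq L g hx0 hxL).symm
  have hQhval : ∀ {x : ℝ}, 0 ≤ x → x ≤ L → Qh x = ∫ s in Set.Ioo (0:ℝ) x, h s := by
    intro x hx0 hxL
    simp only [hQhdef]
    exact (prim_eq L h hx0 hxL).symm
  have hrepu : ∀ x ∈ Set.Icc (0:ℝ) L, u.toFun x = u.toFun 0 + Qg x := by
    intro x hx
    rw [u.eq_intderiv x hx, intervalIntegral.integral_of_le hx.1,
      integral_Ioc_eq_integral_Ioo, hQgval hx.1 hx.2]
  have hrepv : ∀ x ∈ Set.Icc (0:ℝ) L, star (v.toFun x) = star (v.toFun 0) + Qh x := by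
    intro x hx
    rw [v.eq_intderiv x hx, star_add]
    congr 1
    rw [intervalIntegral.integral_of_le hx.1, integral_Ioc_eq_integral_Ioo,
      hQhval hx.1 hx.2]
    simp only [hhdef]
    exact (integral_conj (f := fun s => v.deriv s)).symm
  have keyQ : (∫ t in Set.Ioo (0:ℝ) L, g t * Qh t)
      + (∫ t in Set.Ioo (0:ℝ) L, Qg t * h t) = Qg L * Qh L := by
    have e1 : (∫ t in Set.Ioo (0:ℝ) L, g t * Qh t)
        = ∫ t in Set.Ioo (0:ℝ) L, g t * ∫ s in Set.Ioo (0:ℝ) t, h s := by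
      apply integral_congr_ae
      filter_upwards [ae_restrict_mem measurableSet_Ioo] with t ht
      rw [hQhval ht.1.le ht.2.le]
    have e2 : (∫ t in Set.Ioo (0:ℝ) L, Qg t * h t)
        = ∫ t in Set.Ioo (0:ℝ) L, (∫ s in Set.Ioo (0:ℝ) t, g s) * h t := by
      apply integral_congr_ae
      filter_upwards [ae_restrict_mem measurableSet_Ioo] with t ht
      rw [hQgval ht.1.le ht.2.le]
    rw [e1, e2, key L g h hg hh, hQgval hL.le le_rfl, hQhval hL.le le_rfl]
  have int1 : Integrable (fun t => g t * Qh t) (volume.restrict (Set.Ioo (0:ℝ) L)) :=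
    mul2 hg2 hQh2
  have int2 : Integrable (fun t => Qg t * h t) (volume.restrict (Set.Ioo (0:ℝ) L)) :=
    mul2 hQg2 hh2
  have intgb : Integrable (fun t => g t * star (v.toFun 0))
      (volume.restrict (Set.Ioo (0:ℝ) L)) := hg.mul_const _
  have intah : Integrable (fun t => u.toFun 0 * h t)
      (volume.restrict (Set.Ioo (0:ℝ) L)) := hh.const_mul _
  have e1 : (∫ t in Set.Ioo (0:ℝ) L, u.deriv t * star (v.toFun t))
      = (∫ t in Set.Ioo (0:ℝ) L, g t * star (v.toFun 0))
        + ∫ t in Set.Ioo (0:ℝ) L, g t * Qh t := by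
    rw [← integral_add intgb int1]
    apply integral_congr_ae
    filter_upwards [ae_restrict_mem measurableSet_Ioo] with t ht
    rw [hrepv t (Set.Ioo_subset_Icc_self ht)]
    ring
  have e2 : (∫ t in Set.Ioo (0:ℝ) L, u.toFun t * star (v.deriv t))
      = (∫ t in Set.Ioo (0:ℝ) L, u.toFun 0 * h t)
        + ∫ t in Set.Ioo (0:ℝ) L, Qg t * h t := by
    rw [← integral_add intah int2]
    apply integral_congr_ae
    filter_upwards [ae_restrict_mem measurableSet_Ioo] with t ht
    rw [hrepu t (Set.Ioo_subset_Icc_self ht)]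
    simp only [hhdef]
    ring
  rw [e1, e2, integral_mul_const, integral_const_mul,
    hrepu L ⟨hL.le, le_rfl⟩, hrepv L ⟨hL.le, le_rfl⟩,
    hQgval hL.le le_rfl, hQhval hL.le le_rfl]
  have kk := keyQ
  rw [hQgval hL.le le_rfl, hQhval hL.le le_rfl] at kk
  linear_combination kk

/-- If `(α, δ, ζ)` solves `α' - iωδ = f₁`, `α - iω μ⁻¹ ζ = f₃`,
`-δ' + ζ + iωα = g₁` a.e. on `(0,L)` with `α(0) = 0` and `iω δ(L) = -μ̃ α(L)`, where
`μ̃ = (μ - ω²)^{1/2}` is the principal square root, then `α` satisfies the weak second-order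
formulation: for all `v ∈ H¹(0,L)` with `v(0) = 0`,
`(α',v') + (μ-ω²)(α,v) + μ̃ α(L) conj(v(L)) = (f₁,v') + iω (g₁,v) + μ (f₃,v)`. -/
theorem weak_form_alpha (L ω μ : ℝ) (hL : 0 < L) (hω : 0 < ω) (hμ : 0 < μ)
    (hne : μ ≠ ω ^ 2)
    (f₁ f₃ g₁ : ℝ → ℂ)
    (hf₁ : MemLp f₁ 2 (volume.restrict (Set.Ioo (0:ℝ) L)))
    (hf₃ : MemLp f₃ 2 (volume.restrict (Set.Ioo (0:ℝ) L)))
    (hg₁ : MemLp g₁ 2 (volume.restrict (Set.Ioo (0:ℝ) L)))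
    (α δ : H1 L) (ζ : ℝ → ℂ) (hζ : MemLp ζ 2 (volume.restrict (Set.Ioo (0:ℝ) L)))
    (hode : ∀ᵐ t ∂(volume.restrict (Set.Ioo (0:ℝ) L)),
      α.deriv t - Complex.I * ω * δ.toFun t = f₁ t ∧
      α.toFun t - Complex.I * ω * (μ : ℂ)⁻¹ * ζ t = f₃ t ∧
      -δ.deriv t + ζ t + Complex.I * ω * α.toFun t = g₁ t)
    (hbc0 : α.toFun 0 = 0)
    (hbcL : Complex.I * ω * δ.toFun L
        = -(((μ : ℂ) - (ω : ℂ) ^ 2) ^ ((1 : ℂ) / 2)) * α.toFun L) :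
    ∀ v : H1 L, v.toFun 0 = 0 →
      (∫ t in Set.Ioo (0:ℝ) L, α.deriv t * star (v.deriv t)) +
        ((μ : ℂ) - (ω : ℂ) ^ 2) * (∫ t in Set.Ioo (0:ℝ) L, α.toFun t * star (v.toFun t)) +
        (((μ : ℂ) - (ω : ℂ) ^ 2) ^ ((1 : ℂ) / 2)) * α.toFun L * star (v.toFun L)
      = (∫ t in Set.Ioo (0:ℝ) L, f₁ t * star (v.deriv t)) +
        Complex.I * ω * (∫ t in Set.Ioo (0:ℝ) L, g₁ t * star (v.toFun t)) +
        (μ : ℂ) * ∫ t in Set.Ioo (0:ℝ) L, f₃ t * star (v.toFun t) := by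
  intro v hv0
  haveI := finmeas L
  have hα2 : MemLp α.toFun 2 (volume.restrict (Set.Ioo (0:ℝ) L)) :=
    cont_mem2 L _ α.continuousOn
  have hδ2 : MemLp δ.toFun 2 (volume.restrict (Set.Ioo (0:ℝ) L)) :=
    cont_mem2 L _ δ.continuousOn
  have hvs2 : MemLp (fun t => star (v.toFun t)) 2 (volume.restrict (Set.Ioo (0:ℝ) L)) :=
    star2 (cont_mem2 L _ v.continuousOn)
  have hvd2 : MemLp (fun t => star (v.deriv t)) 2 (volume.restrict (Set.Ioo (0:ℝ) L)) :=
    star2 v.memLp_deriv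
  have iαd_vd := mul2 α.memLp_deriv hvd2
  have iδ_vd := mul2 hδ2 hvd2
  have iδd_vs := mul2 δ.memLp_deriv hvs2
  have iζ_vs := mul2 hζ hvs2
  have iα_vs := mul2 hα2 hvs2
  have ef1 : (∫ t in Set.Ioo (0:ℝ) L, f₁ t * star (v.deriv t))
      = (∫ t in Set.Ioo (0:ℝ) L, α.deriv t * star (v.deriv t))
        - Complex.I * ω * ∫ t in Set.Ioo (0:ℝ) L, δ.toFun t * star (v.deriv t) := by
    have step : (∫ t in Set.Ioo (0:ℝ) L, f₁ t * star (v.deriv t))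
        = ∫ t in Set.Ioo (0:ℝ) L, (α.deriv t * star (v.deriv t)
            - Complex.I * ω * (δ.toFun t * star (v.deriv t))) := by
      apply integral_congr_ae
      filter_upwards [hode] with t ht
      rw [← ht.1]
      ring
    rw [step, integral_sub iαd_vd (iδ_vd.const_mul _), integral_const_mul]
  have eg1 : (∫ t in Set.Ioo (0:ℝ) L, g₁ t * star (v.toFun t))
      = -(∫ t in Set.Ioo (0:ℝ) L, δ.deriv t * star (v.toFun t))
        + (∫ t in Set.Ioo (0:ℝ) L, ζ t * star (v.toFun t))
        + Complex.I * ω * ∫ t in Set.Ioo (0:ℝ) L, α.toFun t * star (v.toFun t) := by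
    have step : (∫ t in Set.Ioo (0:ℝ) L, g₁ t * star (v.toFun t))
        = ∫ t in Set.Ioo (0:ℝ) L, (-(δ.deriv t * star (v.toFun t))
            + ζ t * star (v.toFun t)
            + Complex.I * ω * (α.toFun t * star (v.toFun t))) := by
      apply integral_congr_ae
      filter_upwards [hode] with t ht
      rw [← ht.2.2]
      ring
    have ineg1 : Integrable (fun t => -(δ.deriv t * star (v.toFun t)))
        (volume.restrict (Set.Ioo (0:ℝ) L)) := iδd_vs.neg
    have ineg : Integrable (fun t => -(δ.deriv t * star (v.toFun t)) + ζ t * star (v.toFun t))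
        (volume.restrict (Set.Ioo (0:ℝ) L)) := ineg1.add iζ_vs
    rw [step, integral_add ineg (iα_vs.const_mul _),
      integral_add ineg1 iζ_vs, integral_neg, integral_const_mul]
  have ef3 : (∫ t in Set.Ioo (0:ℝ) L, f₃ t * star (v.toFun t))
      = (∫ t in Set.Ioo (0:ℝ) L, α.toFun t * star (v.toFun t))
        - Complex.I * ω * (μ : ℂ)⁻¹ * ∫ t in Set.Ioo (0:ℝ) L, ζ t * star (v.toFun t) := by
    have step : (∫ t in Set.Ioo (0:ℝ) L, f₃ t * star (v.toFun t))
        = ∫ t in Set.Ioo (0:ℝ) L, (α.toFun t * star (v.toFun t)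
            - Complex.I * ω * (μ : ℂ)⁻¹ * (ζ t * star (v.toFun t))) := by
      apply integral_congr_ae
      filter_upwards [hode] with t ht
      rw [← ht.2.1]
      ring
    rw [step, integral_sub iα_vs (iζ_vs.const_mul _), integral_const_mul]
  have hibp := ibp L hL δ v
  rw [hv0, star_zero, mul_zero, sub_zero] at hibp
  have hμ0 : (μ : ℂ) ≠ 0 := by
    exact_mod_cast hμ.ne'
  have hinv : (μ : ℂ) * (μ : ℂ)⁻¹ = 1 := mul_inv_cancel₀ hμ0
  have hI : (Complex.I) ^ 2 = -1 := Complex.I_sq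
  rw [ef1, eg1, ef3]
  linear_combination (Complex.I * (ω : ℂ)) * hibp + (star (v.toFun L)) * hbcL
    + (-(ω : ℂ) ^ 2 * (∫ t in Set.Ioo (0:ℝ) L, α.toFun t * star (v.toFun t))) * hI
    + (Complex.I * (ω : ℂ) * (∫ t in Set.Ioo (0:ℝ) L, ζ t * star (v.toFun t))) * hinv
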